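/- For all nonnegative integers n, k, r: the number of partitions μ of n whose 2-core is the staircase Δ_k = (k, k−1, …, 2, 1) and with h_{2,0}(μ) = r equals the number of partitions μ of n whose 2-core is Δ_k and with a_2(μ) = r. In other words, the statistics h_{2,0} and a_2 are equidistributed over the set of partitions of n with any fixed 2-core. -/

import Mathlib

open Polynomial

/-- A partition: a weakly decreasing, finitely supported sequence of naturals;
`parts i` is the `(i+1)`-st part `λ_{i+1}`. -/
structure SeqPartition where
  parts : ℕ → ℕ
  antitone : ∀ ⦃i j : ℕ⦄, i ≤ j → parts j ≤ parts i
  finite_support : (Function.support parts).Finite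

namespace SeqPartition

/-- Cells, 0-indexed: `(i, j)` is the cell in row `i+1`, column `j+1`. -/
def cells (μ : SeqPartition) : Set (ℕ × ℕ) := {c | c.2 < μ.parts c.1}

/-- The size `|μ|` of a partition: the number of cells of its Young diagram. -/
noncomputable def size (μ : SeqPartition) : ℕ := μ.cells.ncard

/-- The arm length of a cell: the number of cells in its row strictly to its right. -/
def arm (μ : SeqPartition) (c : ℕ × ℕ) : ℕ := μ.parts c.1 - (c.2 + 1)

/-- The leg length of a cell: the number of cells in its column strictly below it. -/
noncomputable def leg (μ : SeqPartition) (c : ℕ × ℕ) : ℕ :=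
  {r : ℕ | c.1 < r ∧ c.2 < μ.parts r}.ncard

/-- The number of nonzero parts. -/
noncomputable def numParts (μ : SeqPartition) : ℕ := {i : ℕ | μ.parts i ≠ 0}.ncard

end SeqPartition

/-- `h_{2,0}`: the number of cells with leg length `0` and odd arm length. -/
noncomputable def SeqPartition.h20 (μ : SeqPartition) : ℕ :=
  {c ∈ μ.cells | μ.leg c = 0 ∧ Odd (μ.arm c)}.ncard

/-- `a_2`: the largest part occurring at least twice (0 if no part repeats).
Since the parts are weakly decreasing, a value occurs twice iff it occurs at two
consecutive indices. -/
noncomputable def SeqPartition.a2 (μ : SeqPartition) : ℕ :=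
  sSup {v : ℕ | ∃ i, μ.parts i = v ∧ μ.parts (i + 1) = v}

/-- The staircase partition `Δ_k = (k, k-1, …, 2, 1)`. -/
noncomputable def staircase (k : ℕ) : SeqPartition where
  parts := fun i => k - i
  antitone := fun i j h => by show k - j ≤ k - i; omega
  finite_support := Set.Finite.subset (Set.finite_Iio k) (fun i hi => by
    simp only [Function.mem_support] at hi
    exact Set.mem_Iio.mpr (by omega))

/-- A single domino removal: either one part decreases by `2`, or two equal consecutive
parts each decrease by `1`. -/
def DominoStep (lam mu : SeqPartition) : Prop :=
  (∃ i, lam.parts i = mu.parts i + 2 ∧ ∀ j, j ≠ i → mu.parts j = lam.parts j) ∨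
  (∃ i, lam.parts i = lam.parts (i + 1) ∧ lam.parts i = mu.parts i + 1 ∧
    lam.parts (i + 1) = mu.parts (i + 1) + 1 ∧
    ∀ j, j ≠ i → j ≠ i + 1 → mu.parts j = lam.parts j)

/-- `mu` is the 2-core of `lam`: it is obtained from `lam` by repeated domino removals
and admits no further domino removal. -/
def TwoCoreOf (lam mu : SeqPartition) : Prop :=
  Relation.ReflTransGen DominoStep lam mu ∧ ∀ ν, ¬ DominoStep mu ν

namespace Aux
open SeqPartition

@[ext] theorem SeqPartition.ext' {a b : SeqPartition} (h : a.parts = b.parts) : a = b := by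
  cases a; cases b; simpa using h

/-- A bound beyond which all parts vanish. -/
theorem exists_bound (l : SeqPartition) : ∃ N, ∀ i, N ≤ i → l.parts i = 0 := by
  obtain ⟨F, hF⟩ := Set.Finite.exists_finset_coe l.finite_support
  refine ⟨F.sup id + 1, fun i hi => ?_⟩
  by_contra h
  have : i ∈ F := by rw [← Finset.mem_coe, hF]; exact h
  have := Finset.le_sup (f := id) this
  simp only [id] at this
  omega

noncomputable def pbound (l : SeqPartition) : ℕ := (exists_bound l).choose

theorem pbound_spec (l : SeqPartition) : ∀ i, pbound l ≤ i → l.parts i = 0 :=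
  (exists_bound l).choose_spec

/-- Finite lower subsets of ℕ are initial segments; membership iff index below ncard. -/
theorem lower_ncard {S : Set ℕ} (hfin : S.Finite) (hlow : ∀ ⦃a b : ℕ⦄, a ≤ b → b ∈ S → a ∈ S) :
    ∀ i, i ∈ S ↔ i < S.ncard := by
  suffices h : S = Set.Iio S.ncard by intro i; nth_rewrite 1 [h]; exact Set.mem_Iio
  rcases S.eq_empty_or_nonempty with h | h
  · rw [h, Set.ncard_empty]
    ext x; simp
  · obtain ⟨M, hM, hmax⟩ := Set.Finite.exists_maximalFor id S hfin h
    have hsub : S = Set.Iio (M + 1) := by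
      ext x
      simp only [Set.mem_Iio]
      constructor
      · intro hx
        by_contra hc
        have := hmax (j := x) hx (by simp only [id]; omega)
        simp only [id] at this
        omega
      · intro hx; exact hlow (by omega : x ≤ M) hM
    have hn : S.ncard = M + 1 := by
      rw [hsub, ← Nat.card_coe_set_eq, Nat.card_eq_card_toFinset]
      simp
    rw [hn]; exact hsub

theorem lower_ncard' {S : Set ℕ} (hfin : S.Finite) (hlow : ∀ ⦃a b : ℕ⦄, a ≤ b → b ∈ S → a ∈ S) :
    S = Set.Iio S.ncard := Set.ext fun i => by rw [lower_ncard hfin hlow, Set.mem_Iio]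

/-- numParts characterization -/
theorem lt_numParts_iff (l : SeqPartition) (i : ℕ) : i < l.numParts ↔ l.parts i ≠ 0 := by
  have hfin : {i : ℕ | l.parts i ≠ 0}.Finite := l.finite_support
  have hlow : ∀ ⦃a b : ℕ⦄, a ≤ b → b ∈ {i : ℕ | l.parts i ≠ 0} → a ∈ {i : ℕ | l.parts i ≠ 0} := by
    intro a b hab hb
    simp only [Set.mem_setOf_eq] at *
    have := l.antitone hab
    omega
  exact (lower_ncard hfin hlow i).symm

/-- The gap sequence of a partition. -/
def gap (l : SeqPartition) (i : ℕ) : ℕ := l.parts i - l.parts (i + 1)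

theorem parts_succ_add_gap (l : SeqPartition) (i : ℕ) :
    l.parts i = gap l i + l.parts (i + 1) := by
  have := l.antitone (show i ≤ i + 1 by omega); unfold gap; omega

theorem gap_bound (l : SeqPartition) (i : ℕ) (h : pbound l ≤ i) : gap l i = 0 := by
  unfold gap; rw [pbound_spec l i h, pbound_spec l (i+1) (by omega)]

/-- Build a partition from a gap sequence vanishing from `N` on. -/
def ofGaps (g : ℕ → ℕ) (N : ℕ) (hg : ∀ i, N ≤ i → g i = 0) : SeqPartition where
  parts := fun i => ∑ j ∈ Finset.Ico i N, g j
  antitone := by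
    intro i j hij
    exact Finset.sum_le_sum_of_subset (Finset.Ico_subset_Ico hij le_rfl)
  finite_support := by
    apply Set.Finite.subset (Set.finite_Iio N)
    intro i hi
    simp only [Function.mem_support] at hi
    by_contra h
    simp only [Set.mem_Iio, not_lt] at h
    exact hi (by rw [Finset.Ico_eq_empty (by omega)]; simp)

theorem ofGaps_parts (g : ℕ → ℕ) (N : ℕ) (hg) (i : ℕ) :
    (ofGaps g N hg).parts i = ∑ j ∈ Finset.Ico i N, g j := rfl

theorem ofGaps_parts_zero_of_le (g : ℕ → ℕ) (N : ℕ) (hg) (i : ℕ) (h : N ≤ i) :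
    (ofGaps g N hg).parts i = 0 := by
  rw [ofGaps_parts, Finset.Ico_eq_empty (by omega)]; simp

theorem ofGaps_parts_succ (g : ℕ → ℕ) (N : ℕ) (hg) (i : ℕ) :
    (ofGaps g N hg).parts i = g i + (ofGaps g N hg).parts (i + 1) := by
  rcases le_or_gt N i with h | h
  · rw [ofGaps_parts_zero_of_le g N hg i h, ofGaps_parts_zero_of_le g N hg (i+1) (by omega),
      hg i h]
  · rw [ofGaps_parts, ofGaps_parts, Finset.sum_eq_sum_Ico_succ_bot h]

theorem gap_ofGaps (g : ℕ → ℕ) (N : ℕ) (hg) (i : ℕ) :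
    gap (ofGaps g N hg) i = g i := by
  have := ofGaps_parts_succ g N hg i
  unfold gap; omega

/-- Two partitions with the same gaps and both vanishing are equal (reconstruction). -/
theorem ofGaps_gap (l : SeqPartition) (N : ℕ) (hN : ∀ i, N ≤ i → l.parts i = 0)
    (hg : ∀ i, N ≤ i → gap l i = 0) : ofGaps (gap l) N hg = l := by
  ext i : 2
  show (ofGaps (gap l) N hg).parts i = l.parts i
  rcases le_or_gt N i with h | h
  · rw [ofGaps_parts_zero_of_le _ _ _ i h, hN i h]
  · -- downward induction from N
    have key : ∀ m, m ≤ N → (ofGaps (gap l) N hg).parts (N - m) = l.parts (N - m) := by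
      intro m
      induction m with
      | zero => intro _; simp [ofGaps_parts_zero_of_le _ N hg N le_rfl, hN N le_rfl]
      | succ m ih =>
        intro hm
        have h1 : N - (m+1) + 1 = N - m := by omega
        rw [ofGaps_parts_succ, h1, ih (by omega), ← h1, ← parts_succ_add_gap]
    have := key (N - i) (by omega)
    rwa [Nat.sub_sub_self (by omega)] at this

end Aux
namespace Aux2
open SeqPartition Aux

theorem cells_finite (l : SeqPartition) : l.cells.Finite := by
  apply Set.Finite.subset (Set.Finite.prod l.finite_support (Set.finite_Iio (l.parts 0)))
  rintro ⟨i, j⟩ hc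
  simp only [SeqPartition.cells, Set.mem_setOf_eq] at hc
  constructor
  · simp only [Function.mem_support]; omega
  · simp only [Set.mem_Iio]
    have := l.antitone (Nat.zero_le i)
    omega

def cellsF (l : SeqPartition) (N : ℕ) : Finset (ℕ × ℕ) :=
  (Finset.range N).biUnion (fun i => {i} ×ˢ Finset.range (l.parts i))

theorem mem_cellsF (l : SeqPartition) (N : ℕ) (c : ℕ × ℕ) :
    c ∈ cellsF l N ↔ c.1 < N ∧ c.2 < l.parts c.1 := by
  rcases c with ⟨i, j⟩
  simp only [cellsF, Finset.mem_biUnion, Finset.mem_range, Finset.mem_product,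
    Finset.mem_singleton]
  constructor
  · rintro ⟨a, ha, h1, h2⟩
    subst h1; exact ⟨ha, h2⟩
  · rintro ⟨h1, h2⟩
    exact ⟨i, h1, rfl, h2⟩

theorem coe_cellsF (l : SeqPartition) (N : ℕ) (hN : ∀ i, N ≤ i → l.parts i = 0) :
    (cellsF l N : Set (ℕ × ℕ)) = l.cells := by
  ext c
  simp only [Finset.mem_coe, mem_cellsF, SeqPartition.cells, Set.mem_setOf_eq]
  constructor
  · tauto
  · intro h
    refine ⟨?_, h⟩
    by_contra hc
    rw [hN c.1 (by omega)] at h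
    omega

theorem toFinset_cells (l : SeqPartition) (N : ℕ) (hN : ∀ i, N ≤ i → l.parts i = 0) :
    (cells_finite l).toFinset = cellsF l N := by
  apply Finset.coe_injective
  rw [Set.Finite.coe_toFinset, coe_cellsF l N hN]

theorem size_eq_sum (l : SeqPartition) (N : ℕ) (hN : ∀ i, N ≤ i → l.parts i = 0) :
    l.size = ∑ i ∈ Finset.range N, l.parts i := by
  have h1 : l.size = (cellsF l N).card := by
    rw [SeqPartition.size, ← coe_cellsF l N hN, Set.ncard_coe_finset]
  rw [h1, cellsF, Finset.card_biUnion]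
  · apply Finset.sum_congr rfl
    intro i _
    rw [Finset.card_product, Finset.card_singleton, Finset.card_range, one_mul]
  · intro x _ y _ hxy
    simp only [Finset.disjoint_left]
    rintro ⟨a, b⟩ h1 h2
    simp only [Finset.mem_product, Finset.mem_singleton] at h1 h2
    exact hxy (h1.1.symm.trans h2.1)

theorem sum_pow_neg_one (m : ℕ) :
    ∑ j ∈ Finset.range m, (-1 : ℤ)^j = if Odd m then 1 else 0 := by
  induction m with
  | zero => simp
  | succ m ih =>
    rw [Finset.sum_range_succ, ih]
    rcases Nat.even_or_odd m with h | h
    · have h1 : ¬ Odd m := by rw [Nat.not_odd_iff_even]; exact h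
      have h2 : Odd (m+1) := Even.add_one h
      rw [if_neg h1, if_pos h2, Even.neg_one_pow h]; ring
    · have h1 : ¬ Odd (m+1) := by rw [Nat.not_odd_iff_even]; exact Odd.add_one h
      rw [if_pos h, if_neg h1, Odd.neg_one_pow h]; ring

noncomputable def Dstat (l : SeqPartition) : ℤ :=
  ∑ c ∈ (cells_finite l).toFinset, (-1 : ℤ)^(c.1 + c.2)

theorem Dstat_row (l : SeqPartition) (N : ℕ) (hN : ∀ i, N ≤ i → l.parts i = 0) :
    Dstat l = ∑ i ∈ Finset.range N, (-1 : ℤ)^i * (if Odd (l.parts i) then 1 else 0) := by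
  rw [Dstat, toFinset_cells l N hN, cellsF, Finset.sum_biUnion]
  · apply Finset.sum_congr rfl
    intro i _
    rw [Finset.sum_product, Finset.sum_singleton]
    calc ∑ j ∈ Finset.range (l.parts i), (-1:ℤ)^(i + j)
        = ∑ j ∈ Finset.range (l.parts i), (-1:ℤ)^i * (-1:ℤ)^j := by
          apply Finset.sum_congr rfl; intro j _; rw [pow_add]
      _ = (-1:ℤ)^i * ∑ j ∈ Finset.range (l.parts i), (-1:ℤ)^j := by
          rw [Finset.mul_sum]
      _ = _ := by rw [sum_pow_neg_one]
  · intro x _ y _ hxy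
    simp only [Finset.disjoint_left]
    rintro ⟨a, b⟩ h1 h2
    simp only [Finset.mem_product, Finset.mem_singleton] at h1 h2
    exact hxy (h1.1.symm.trans h2.1)

theorem leg_eq_zero_iff (l : SeqPartition) (c : ℕ × ℕ) :
    l.leg c = 0 ↔ l.parts (c.1 + 1) ≤ c.2 := by
  constructor
  · intro h
    by_contra hc
    push_neg at hc
    have hfin : {r : ℕ | c.1 < r ∧ c.2 < l.parts r}.Finite := by
      apply Set.Finite.subset l.finite_support
      intro r hr
      simp only [Set.mem_setOf_eq] at hr
      simp only [Function.mem_support]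
      omega
    have hne : {r : ℕ | c.1 < r ∧ c.2 < l.parts r}.Nonempty := ⟨c.1 + 1, by simp; omega⟩
    have := (Set.ncard_pos hfin).mpr hne
    rw [SeqPartition.leg] at h
    omega
  · intro h
    have : {r : ℕ | c.1 < r ∧ c.2 < l.parts r} = ∅ := by
      ext r
      simp only [Set.mem_setOf_eq, Set.mem_empty_iff_false, iff_false, not_and, not_lt]
      intro hr
      calc l.parts r ≤ l.parts (c.1 + 1) := l.antitone (by omega)
        _ ≤ c.2 := h
    rw [SeqPartition.leg, this, Set.ncard_empty]

theorem row_filter_card (a b : ℕ) (hba : b ≤ a) :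
    ((Finset.range a).filter fun j => b ≤ j ∧ Odd (a - (j+1))).card = (a - b)/2 := by
  rw [show (a-b)/2 = ((Finset.range ((a-b)/2)).card) by rw [Finset.card_range]]
  apply Finset.card_bij' (fun j _ => (a - (j+1))/2) (fun m _ => a - (2*m+2))
  · intro j hj
    simp only [Finset.mem_filter, Finset.mem_range, Nat.odd_iff] at hj ⊢
    omega
  · intro m hm
    simp only [Finset.mem_filter, Finset.mem_range, Nat.odd_iff] at hm ⊢
    omega
  · intro j hj
    simp only [Finset.mem_filter, Finset.mem_range, Nat.odd_iff] at hj
    omega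
  · intro m hm
    simp only [Finset.mem_range] at hm
    omega

def h20F (l : SeqPartition) (N : ℕ) : Finset (ℕ × ℕ) :=
  (Finset.range N).biUnion (fun i => {i} ×ˢ
    ((Finset.range (l.parts i)).filter fun j => l.parts (i+1) ≤ j ∧ Odd (l.parts i - (j+1))))

theorem coe_h20F (l : SeqPartition) (N : ℕ) (hN : ∀ i, N ≤ i → l.parts i = 0) :
    (h20F l N : Set (ℕ × ℕ)) = {c ∈ l.cells | l.leg c = 0 ∧ Odd (l.arm c)} := by
  ext ⟨i, j⟩
  simp only [h20F, Finset.coe_biUnion, Set.mem_iUnion, Finset.mem_coe, Finset.mem_range,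
    Finset.mem_product, Finset.mem_singleton, Finset.mem_filter, Set.mem_setOf_eq,
    SeqPartition.cells, leg_eq_zero_iff, SeqPartition.arm]
  constructor
  · rintro ⟨a, ha, ⟨h1, h2⟩⟩
    subst h1
    exact ⟨h2.1, h2.2.1, h2.2.2⟩
  · rintro ⟨h1, h2, h3⟩
    refine ⟨i, ?_, rfl, h1, h2, h3⟩
    by_contra hc
    rw [hN i (by omega)] at h1
    omega

theorem h20_eq_sum (l : SeqPartition) (N : ℕ) (hN : ∀ i, N ≤ i → l.parts i = 0) :
    l.h20 = ∑ i ∈ Finset.range N, (gap l i)/2 := by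
  have h1 : l.h20 = (h20F l N).card := by
    rw [SeqPartition.h20, ← coe_h20F l N hN, Set.ncard_coe_finset]
  rw [h1, h20F, Finset.card_biUnion]
  · apply Finset.sum_congr rfl
    intro i _
    rw [Finset.card_product, Finset.card_singleton, one_mul,
      row_filter_card (l.parts i) (l.parts (i+1)) (l.antitone (by omega))]
    rfl
  · intro x _ y _ hxy
    simp only [Finset.disjoint_left]
    rintro ⟨a, b⟩ h1 h2
    simp only [Finset.mem_product, Finset.mem_singleton, Finset.mem_filter] at h1 h2
    exact hxy (h1.1.symm.trans h2.1)

end Aux2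
namespace Aux3
open SeqPartition Aux Aux2

theorem colset_finite (l : SeqPartition) (i : ℕ) : {r : ℕ | i < l.parts r}.Finite := by
  apply Set.Finite.subset l.finite_support
  intro r hr
  simp only [Set.mem_setOf_eq] at hr
  simp only [Function.mem_support]
  omega

theorem colset_lower (l : SeqPartition) (i : ℕ) :
    ∀ ⦃a b : ℕ⦄, a ≤ b → b ∈ {r : ℕ | i < l.parts r} → a ∈ {r : ℕ | i < l.parts r} := by
  intro a b hab hb
  simp only [Set.mem_setOf_eq] at *
  have := l.antitone hab
  omega

noncomputable def conj (l : SeqPartition) : SeqPartition where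
  parts := fun i => {r : ℕ | i < l.parts r}.ncard
  antitone := by
    intro i j hij
    apply Set.ncard_le_ncard _ (colset_finite l i)
    intro r hr
    simp only [Set.mem_setOf_eq] at *
    omega
  finite_support := by
    apply Set.Finite.subset (Set.finite_Iio (l.parts 0))
    intro i hi
    simp only [Function.mem_support, Set.mem_Iio] at *
    by_contra h
    apply hi
    have : {r : ℕ | i < l.parts r} = ∅ := by
      ext r
      simp only [Set.mem_setOf_eq, Set.mem_empty_iff_false, iff_false, not_lt]
      calc l.parts r ≤ l.parts 0 := l.antitone (Nat.zero_le r)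
        _ ≤ i := by omega
    rw [this, Set.ncard_empty]

theorem conj_lt_iff (l : SeqPartition) (i j : ℕ) :
    j < (conj l).parts i ↔ i < l.parts j := by
  have := lower_ncard (colset_finite l i) (colset_lower l i) j
  rw [show (conj l).parts i = {r : ℕ | i < l.parts r}.ncard from rfl, ← this]
  simp only [Set.mem_setOf_eq]

theorem conj_conj (l : SeqPartition) : conj (conj l) = l := by
  ext i : 2
  show (conj (conj l)).parts i = l.parts i
  have h1 := fun j => conj_lt_iff (conj l) i j
  have h2 := fun j => conj_lt_iff l j i
  have ha := h1 (l.parts i)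
  have hb := h1 ((conj (conj l)).parts i - 1)
  have hc := h2 (l.parts i)
  have hd : ∀ j, j < (conj (conj l)).parts i ↔ j < l.parts i := by
    intro j; rw [h1 j, h2 j]
  have he := hd (l.parts i)
  have hf := hd ((conj (conj l)).parts i)
  omega

theorem cells_conj (l : SeqPartition) : (conj l).cells = Prod.swap '' l.cells := by
  rw [Set.image_swap_eq_preimage_swap]
  ext ⟨i, j⟩
  simp only [SeqPartition.cells, Set.mem_setOf_eq, Set.mem_preimage, Prod.swap_prod_mk]
  exact conj_lt_iff l i j

theorem size_conj (l : SeqPartition) : (conj l).size = l.size := by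
  rw [SeqPartition.size, SeqPartition.size, cells_conj, Set.ncard_image_of_injective _ Prod.swap_injective]

theorem Dstat_conj (l : SeqPartition) : Dstat (conj l) = Dstat l := by
  rw [Dstat, Dstat]
  apply Finset.sum_bij' (fun c _ => Prod.swap c) (fun c _ => Prod.swap c)
  · intro c hc
    simp only [Set.Finite.mem_toFinset] at *
    rw [cells_conj] at hc
    obtain ⟨d, hd, hdc⟩ := hc
    rwa [← hdc, Prod.swap_swap]
  · intro c hc
    simp only [Set.Finite.mem_toFinset] at *
    rw [cells_conj]
    exact ⟨c, hc, rfl⟩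
  · intro c _; exact Prod.swap_swap c
  · intro c _; exact Prod.swap_swap c
  · intro c _
    rcases c with ⟨i, j⟩
    simp [add_comm]

theorem ncard_Iio (n : ℕ) : (Set.Iio n).ncard = n := by
  rw [← Nat.card_coe_set_eq, Nat.card_eq_card_toFinset]
  simp

theorem conj_parts_zero (l : SeqPartition) : (conj l).parts 0 = l.numParts := by
  show {r : ℕ | 0 < l.parts r}.ncard = {r : ℕ | l.parts r ≠ 0}.ncard
  congr 1
  ext r
  simp [Nat.pos_iff_ne_zero]

theorem numParts_conj (l : SeqPartition) : (conj l).numParts = l.parts 0 := by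
  rw [SeqPartition.numParts]
  have : {i : ℕ | (conj l).parts i ≠ 0} = Set.Iio (l.parts 0) := by
    ext i
    simp only [Set.mem_setOf_eq, Set.mem_Iio, ← Nat.pos_iff_ne_zero]
    rw [show (0 < (conj l).parts i) ↔ (0 < (conj l).parts i) from Iff.rfl]
    exact conj_lt_iff l i 0
  rw [this, ncard_Iio]

theorem gap_conj (l : SeqPartition) (v : ℕ) :
    gap (conj l) v = {r : ℕ | l.parts r = v + 1}.ncard := by
  have hsub : {r : ℕ | v + 1 < l.parts r} ⊆ {r : ℕ | v < l.parts r} := by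
    intro r hr; simp only [Set.mem_setOf_eq] at *; omega
  have hdiff : {r : ℕ | v < l.parts r} \ {r : ℕ | v + 1 < l.parts r} = {r : ℕ | l.parts r = v + 1} := by
    ext r; simp only [Set.mem_diff, Set.mem_setOf_eq, not_lt]; omega
  rw [gap, show (conj l).parts v = {r : ℕ | v < l.parts r}.ncard from rfl,
    show (conj l).parts (v+1) = {r : ℕ | v + 1 < l.parts r}.ncard from rfl,
    ← Set.ncard_diff hsub (colset_finite l (v+1)), hdiff]

end Aux3
namespace Aux4
open SeqPartition Aux Aux2 Aux3

theorem parts_pos_lt_pbound (l : SeqPartition) (i : ℕ) (h : 0 < l.parts i) : i < pbound l := by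
  by_contra hc
  rw [pbound_spec l i (by omega)] at h
  omega

theorem step_size {lam mu : SeqPartition} (h : DominoStep lam mu) : lam.size = mu.size + 2 := by
  set N := max (pbound lam) (pbound mu) with hN
  have hNl : ∀ i, N ≤ i → lam.parts i = 0 := fun i hi => pbound_spec lam i (by omega)
  have hNm : ∀ i, N ≤ i → mu.parts i = 0 := fun i hi => pbound_spec mu i (by omega)
  rw [size_eq_sum lam N hNl, size_eq_sum mu N hNm]
  rcases h with ⟨i, hi, hoff⟩ | ⟨i, heq, hi1, hi2, hoff⟩
  · have hiN : i ∈ Finset.range N := by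
      simp only [Finset.mem_range]
      have := parts_pos_lt_pbound lam i (by omega)
      omega
    rw [← Finset.sum_erase_add _ _ hiN, ← Finset.sum_erase_add _ _ hiN]
    have : ∑ j ∈ (Finset.range N).erase i, lam.parts j
        = ∑ j ∈ (Finset.range N).erase i, mu.parts j := by
      apply Finset.sum_congr rfl
      intro j hj
      exact (hoff j (Finset.ne_of_mem_erase hj)).symm
    omega
  · have hi1N : i + 1 ∈ Finset.range N := by
      simp only [Finset.mem_range]
      have := parts_pos_lt_pbound lam (i+1) (by omega)
      omega
    have hiN : i ∈ (Finset.range N).erase (i+1) := by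
      simp only [Finset.mem_erase, Finset.mem_range]
      have := parts_pos_lt_pbound lam i (by omega)
      omega
    rw [← Finset.sum_erase_add _ _ hi1N, ← Finset.sum_erase_add _ _ hiN,
      ← Finset.sum_erase_add _ _ hi1N, ← Finset.sum_erase_add _ _ hiN]
    have : ∑ j ∈ ((Finset.range N).erase (i+1)).erase i, lam.parts j
        = ∑ j ∈ ((Finset.range N).erase (i+1)).erase i, mu.parts j := by
      apply Finset.sum_congr rfl
      intro j hj
      have h1 := Finset.ne_of_mem_erase hj
      have h2 := Finset.ne_of_mem_erase (Finset.mem_of_mem_erase hj)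
      exact (hoff j h1 h2).symm
    omega

theorem step_D {lam mu : SeqPartition} (h : DominoStep lam mu) : Dstat lam = Dstat mu := by
  set N := max (pbound lam) (pbound mu) with hN
  have hNl : ∀ i, N ≤ i → lam.parts i = 0 := fun i hi => pbound_spec lam i (by omega)
  have hNm : ∀ i, N ≤ i → mu.parts i = 0 := fun i hi => pbound_spec mu i (by omega)
  rw [Dstat_row lam N hNl, Dstat_row mu N hNm]
  rcases h with ⟨i, hi, hoff⟩ | ⟨i, heq, hi1, hi2, hoff⟩
  · apply Finset.sum_congr rfl
    intro j _
    by_cases hji : j = i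
    · subst hji
      congr 1
      have : Odd (lam.parts j) ↔ Odd (mu.parts j) := by
        rw [Nat.odd_iff, Nat.odd_iff]; omega
      simp only [this]
    · rw [hoff j hji]
  · have hi1N : i + 1 ∈ Finset.range N := by
      simp only [Finset.mem_range]
      have := parts_pos_lt_pbound lam (i+1) (by omega)
      omega
    have hiN : i ∈ (Finset.range N).erase (i+1) := by
      simp only [Finset.mem_erase, Finset.mem_range]
      have := parts_pos_lt_pbound lam i (by omega)
      omega
    rw [← Finset.sum_erase_add _ _ hi1N, ← Finset.sum_erase_add _ _ hiN,
      ← Finset.sum_erase_add _ _ hi1N, ← Finset.sum_erase_add _ _ hiN]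
    have hrest : ∑ j ∈ ((Finset.range N).erase (i+1)).erase i,
          (-1:ℤ)^j * (if Odd (lam.parts j) then 1 else 0)
        = ∑ j ∈ ((Finset.range N).erase (i+1)).erase i,
          (-1:ℤ)^j * (if Odd (mu.parts j) then 1 else 0) := by
      apply Finset.sum_congr rfl
      intro j hj
      have h1 := Finset.ne_of_mem_erase hj
      have h2 := Finset.ne_of_mem_erase (Finset.mem_of_mem_erase hj)
      rw [hoff j h1 h2]
    rw [hrest]
    have hv : lam.parts (i+1) = lam.parts i := heq.symm
    have hmu : mu.parts (i+1) = mu.parts i := by omega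
    have hpow : (-1:ℤ)^(i+1) = -((-1:ℤ)^i) := by rw [pow_succ]; ring
    rw [hv, hmu, hpow]
    ring

theorem staircase_parts (k i : ℕ) : (staircase k).parts i = k - i := rfl

theorem staircase_no_step (k : ℕ) : ∀ ν, ¬ DominoStep (staircase k) ν := by
  intro ν h
  rcases h with ⟨i, hi, hoff⟩ | ⟨i, heq, hi1, hi2, hoff⟩
  · rw [staircase_parts] at hi
    have h2 : i + 1 < k := by omega
    have h3 := hoff (i+1) (by omega)
    rw [staircase_parts] at h3
    have h4 := ν.antitone (show i ≤ i + 1 by omega)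
    omega
  · have e1 : k - i = k - (i+1) := heq
    have e2 : k - i = ν.parts i + 1 := hi1
    omega

/-- Horizontal domino removal candidate. -/
def nuH (l : SeqPartition) (i : ℕ) (h : l.parts (i+1) + 2 ≤ l.parts i) : SeqPartition where
  parts := Function.update l.parts i (l.parts i - 2)
  antitone := by
    apply antitone_nat_of_succ_le
    intro m
    have ha := l.antitone (show m ≤ m + 1 by omega)
    by_cases hm : m = i
    · rw [hm, Function.update_self, Function.update_of_ne (show i + 1 ≠ i by omega)]
      rw [hm] at ha
      omega
    · by_cases hm1 : m + 1 = i
      · rw [Function.update_of_ne hm, hm1, Function.update_self]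
        have h2 := l.antitone (show m ≤ i by omega)
        omega
      · rw [Function.update_of_ne hm, Function.update_of_ne hm1]
        exact ha
  finite_support := by
    apply Set.Finite.subset (Set.Finite.union l.finite_support (Set.finite_singleton i))
    intro j hj
    simp only [Function.mem_support] at hj
    rcases eq_or_ne j i with hji | hji
    · right; simp [hji]
    · left
      rw [Function.update_of_ne hji] at hj
      exact hj

/-- Vertical domino removal candidate. -/
def nuV (l : SeqPartition) (i : ℕ) (heq : l.parts i = l.parts (i+1)) (hpos : 0 < l.parts i)
    (hlt : l.parts (i+2) < l.parts (i+1)) : SeqPartition where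
  parts := fun j => if j = i ∨ j = i + 1 then l.parts j - 1 else l.parts j
  antitone := by
    apply antitone_nat_of_succ_le
    intro m
    have ha := l.antitone (show m ≤ m + 1 by omega)
    show (if m + 1 = i ∨ m + 1 = i + 1 then l.parts (m+1) - 1 else l.parts (m+1))
        ≤ (if m = i ∨ m = i + 1 then l.parts m - 1 else l.parts m)
    rcases eq_or_ne m i with h1 | h1
    · rw [if_pos (show m + 1 = i ∨ m + 1 = i + 1 by omega), if_pos (Or.inl h1)]
      omega
    · rcases eq_or_ne m (i+1) with h2 | h2
      · rw [if_neg (show ¬(m + 1 = i ∨ m + 1 = i + 1) by omega), if_pos (Or.inr h2)]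
        rw [h2]
        have : i + 1 + 1 = i + 2 := by omega
        rw [this]
        omega
      · rcases eq_or_ne (m+1) i with h3 | h3
        · rw [if_pos (Or.inl h3), if_neg (show ¬(m = i ∨ m = i + 1) by omega)]
          omega
        · rw [if_neg (show ¬(m + 1 = i ∨ m + 1 = i + 1) by omega),
            if_neg (show ¬(m = i ∨ m = i + 1) by omega)]
          exact ha
  finite_support := by
    apply Set.Finite.subset l.finite_support
    intro j hj
    simp only [Function.mem_support] at *
    by_cases hjc : j = i ∨ j = i + 1
    · rw [if_pos hjc] at hj
      rcases hjc with h | h <;> subst h <;> omega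
    · rwa [if_neg hjc] at hj

theorem no_step_staircase (l : SeqPartition) (h : ∀ ν, ¬ DominoStep l ν) :
    l = staircase (l.parts 0) := by
  have claimA : ∀ i, l.parts i ≤ l.parts (i+1) + 1 := by
    intro i
    by_contra hc
    push_neg at hc
    have hc' : l.parts (i+1) + 2 ≤ l.parts i := by omega
    apply h (nuH l i hc')
    left
    refine ⟨i, ?_, ?_⟩
    · show l.parts i = Function.update l.parts i (l.parts i - 2) i + 2
      rw [Function.update_self]; omega
    · intro j hj
      show Function.update l.parts i (l.parts i - 2) j = l.parts j
      rw [Function.update_of_ne hj]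
  have claimB : ∀ i, l.parts i = l.parts (i+1) → l.parts i = 0 := by
    intro i heq
    by_contra hpos
    push_neg at hpos
    set v := l.parts i with hv
    have hTfin : {j : ℕ | l.parts j = v}.Finite := by
      apply Set.Finite.subset l.finite_support
      intro j hj
      simp only [Set.mem_setOf_eq, Function.mem_support] at *
      omega
    obtain ⟨M, hM, hmax⟩ := Set.Finite.exists_maximalFor id _ hTfin ⟨i, rfl⟩
    simp only [Set.mem_setOf_eq, id] at hM hmax
    have hi1 : l.parts (i+1) = v := heq.symm
    have hMi : i + 1 ≤ M := by
      by_contra hc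
      have := hmax (j := i+1) hi1 (by omega)
      omega
    have hM1 : l.parts (M - 1) = v := by
      have h1 := l.antitone (show i ≤ M - 1 by omega)
      have h2 := l.antitone (show M - 1 ≤ M by omega)
      omega
    have hM2 : l.parts (M + 1) < v := by
      have h1 := l.antitone (show M ≤ M + 1 by omega)
      rcases Nat.lt_or_ge (l.parts (M+1)) v with h | h
      · exact h
      · have : l.parts (M+1) = v := by omega
        have := hmax (j := M+1) this (by omega)
        omega
    have e1 : M - 1 + 1 = M := by omega
    have e2 : M - 1 + 2 = M + 1 := by omega
    have hstep : l.parts (M-1) = l.parts (M-1+1) := by rw [e1]; omega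
    have hposM : 0 < l.parts (M-1) := by omega
    have hltM : l.parts (M-1+2) < l.parts (M-1+1) := by rw [e1, e2]; omega
    apply h (nuV l (M-1) hstep hposM hltM)
    right
    refine ⟨M - 1, hstep, ?_, ?_, ?_⟩
    · show l.parts (M-1) = (if M - 1 = M - 1 ∨ M - 1 = M - 1 + 1 then l.parts (M-1) - 1
        else l.parts (M-1)) + 1
      rw [if_pos (Or.inl rfl)]
      omega
    · show l.parts (M-1+1) = (if M - 1 + 1 = M - 1 ∨ M - 1 + 1 = M - 1 + 1 then l.parts (M-1+1) - 1
        else l.parts (M-1+1)) + 1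
      rw [if_pos (Or.inr rfl), e1]
      omega
    · intro j hj1 hj2
      show (if j = M - 1 ∨ j = M - 1 + 1 then l.parts j - 1 else l.parts j) = l.parts j
      rw [if_neg (by tauto)]
  have claimC : ∀ i, l.parts i = l.parts 0 - i := by
    intro i
    induction i with
    | zero => omega
    | succ i ih =>
      rcases Nat.eq_zero_or_pos (l.parts i) with h0 | h0
      · have := l.antitone (show i ≤ i + 1 by omega)
        omega
      · have hA := claimA i
        have hB := claimB i
        have := l.antitone (show i ≤ i + 1 by omega)
        omega
  ext i : 2
  rw [staircase_parts]
  exact claimC i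

theorem exists_core (l : SeqPartition) : ∃ k, Relation.ReflTransGen DominoStep l (staircase k) := by
  generalize hn : l.size = n
  induction n using Nat.strong_induction_on generalizing l with
  | _ n ih =>
    by_cases hstep : ∃ ν, DominoStep l ν
    · obtain ⟨ν, hν⟩ := hstep
      have hsz := step_size hν
      obtain ⟨k, hk⟩ := ih ν.size (by omega) ν rfl
      exact ⟨k, Relation.ReflTransGen.head hν hk⟩
    · push_neg at hstep
      refine ⟨l.parts 0, ?_⟩
      rw [← no_step_staircase l hstep]

def delta (k : ℕ) : ℤ := if Even k then -((k/2 : ℕ) : ℤ) else ((k+1)/2 : ℕ)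

theorem Tsum (k : ℕ) :
    ∑ i ∈ Finset.range k, (-1:ℤ)^i * (if Odd (k - i) then 1 else 0) = delta k := by
  induction k with
  | zero => simp [delta]
  | succ k ih =>
    rw [Finset.sum_range_succ']
    have hshift : ∀ i, (-1:ℤ)^(i+1) * (if Odd (k + 1 - (i+1)) then 1 else 0)
        = -((-1:ℤ)^i * (if Odd (k - i) then 1 else 0)) := by
      intro i
      rw [pow_succ, show k + 1 - (i + 1) = k - i by omega]
      ring
    rw [Finset.sum_congr rfl (fun i _ => hshift i), Finset.sum_neg_distrib, ih]
    simp only [pow_zero, one_mul, Nat.sub_zero, delta]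
    rcases Nat.even_or_odd k with h | h
    · have h1 : ¬ Even (k+1) := by simp [Nat.even_add_one, h]
      have h2 : Odd (k+1) := Even.add_one h
      rw [if_pos h, if_neg h1, if_pos h2]
      have : k % 2 = 0 := Nat.even_iff.mp h
      push_cast
      omega
    · have h1 : Even (k+1) := Odd.add_one h
      have h2 : ¬ Odd (k+1) := by rw [Nat.not_odd_iff_even]; exact h1
      rw [if_neg (by rw [Nat.not_even_iff_odd]; exact h), if_pos h1, if_neg h2]
      have : k % 2 = 1 := Nat.odd_iff.mp h
      push_cast
      omega

theorem Dstat_staircase (k : ℕ) : Dstat (staircase k) = delta k := by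
  have hb : ∀ i, k ≤ i → (staircase k).parts i = 0 := by
    intro i hi; rw [staircase_parts]; omega
  rw [Dstat_row (staircase k) k hb]
  simp only [staircase_parts]
  exact Tsum k

theorem delta_inj {k k' : ℕ} (h : delta k = delta k') : k = k' := by
  unfold delta at h
  rcases Nat.even_or_odd k with h1 | h1 <;> rcases Nat.even_or_odd k' with h2 | h2
  · rw [if_pos h1, if_pos h2] at h
    have e1 : k % 2 = 0 := Nat.even_iff.mp h1
    have e2 : k' % 2 = 0 := Nat.even_iff.mp h2
    omega
  · rw [if_pos h1, if_neg (by rw [Nat.not_even_iff_odd]; exact h2)] at h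
    have e1 : k % 2 = 0 := Nat.even_iff.mp h1
    have e2 : k' % 2 = 1 := Nat.odd_iff.mp h2
    omega
  · rw [if_neg (by rw [Nat.not_even_iff_odd]; exact h1), if_pos h2] at h
    have e1 : k % 2 = 1 := Nat.odd_iff.mp h1
    have e2 : k' % 2 = 0 := Nat.even_iff.mp h2
    omega
  · rw [if_neg (by rw [Nat.not_even_iff_odd]; exact h1),
      if_neg (by rw [Nat.not_even_iff_odd]; exact h2)] at h
    have e1 : k % 2 = 1 := Nat.odd_iff.mp h1
    have e2 : k' % 2 = 1 := Nat.odd_iff.mp h2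
    omega

theorem Dstat_rtg {a b : SeqPartition} (h : Relation.ReflTransGen DominoStep a b) :
    Dstat a = Dstat b := by
  induction h with
  | refl => rfl
  | tail _ hstep ih => exact ih.trans (step_D hstep)

theorem twoCoreOf_iff (l : SeqPartition) (k : ℕ) :
    TwoCoreOf l (staircase k) ↔ Dstat l = delta k := by
  constructor
  · rintro ⟨hrtg, _⟩
    rw [Dstat_rtg hrtg, Dstat_staircase]
  · intro hD
    obtain ⟨k', hk'⟩ := exists_core l
    have : Dstat l = delta k' := by rw [Dstat_rtg hk', Dstat_staircase]
    have hkk : k' = k := delta_inj (this.symm.trans hD)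
    subst hkk
    exact ⟨hk', staircase_no_step k'⟩

end Aux4
namespace Aux5
open SeqPartition Aux Aux2 Aux3 Aux4

theorem gap_pbound (l : SeqPartition) : ∀ i, pbound l ≤ i → gap l i = 0 :=
  fun i hi => gap_bound l i hi

theorem ofGaps_parts_any (g : ℕ → ℕ) (N : ℕ) (hg) (M : ℕ) (hM : N ≤ M) (i : ℕ) :
    (ofGaps g N hg).parts i = ∑ j ∈ Finset.Ico i M, g j := by
  rw [ofGaps_parts]
  apply Finset.sum_subset (Finset.Ico_subset_Ico le_rfl hM)
  intro j hj hj'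
  simp only [Finset.mem_Ico] at hj hj'
  exact hg j (by omega)

theorem ofGaps_ext (g g' : ℕ → ℕ) (N N' : ℕ) (hg) (hg') (h : ∀ j, g j = g' j) :
    ofGaps g N hg = ofGaps g' N' hg' := by
  ext i : 2
  show (ofGaps g N hg).parts i = (ofGaps g' N' hg').parts i
  rw [ofGaps_parts_any g N hg (max N N') (le_max_left _ _) i,
    ofGaps_parts_any g' N' hg' (max N N') (le_max_right _ _) i]
  exact Finset.sum_congr rfl (fun j _ => h j)

theorem parts_eq_sum_gap (l : SeqPartition) (N : ℕ) (hN : ∀ i, N ≤ i → l.parts i = 0) (i : ℕ) :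
    l.parts i = ∑ j ∈ Finset.Ico i N, gap l j := by
  have hg : ∀ i, N ≤ i → gap l i = 0 := by
    intro i hi; unfold gap; rw [hN i hi, hN (i+1) (by omega)]
  conv_lhs => rw [← ofGaps_gap l N hN hg]
  rfl

theorem size_gapsum (l : SeqPartition) (N : ℕ) (hN : ∀ i, N ≤ i → l.parts i = 0) :
    l.size = ∑ j ∈ Finset.range N, (j+1) * gap l j := by
  rw [size_eq_sum l N hN]
  have h1 : ∀ i, i < N → l.parts i = ∑ j ∈ Finset.range N, if i ≤ j then gap l j else 0 := by
    intro i _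
    rw [parts_eq_sum_gap l N hN i,
      show Finset.Ico i N = (Finset.range N).filter (fun j => i ≤ j) from by
        ext j; simp only [Finset.mem_Ico, Finset.mem_filter, Finset.mem_range]; omega,
      Finset.sum_filter]
  rw [Finset.sum_congr rfl (fun i hi => h1 i (Finset.mem_range.mp hi)), Finset.sum_comm]
  apply Finset.sum_congr rfl
  intro j hj
  simp only [Finset.mem_range] at hj
  rw [← Finset.sum_filter]
  have : (Finset.range N).filter (fun i => i ≤ j) = Finset.range (j+1) := by
    ext i
    simp only [Finset.mem_filter, Finset.mem_range]
    omega
  rw [this, Finset.sum_const, Finset.card_range, smul_eq_mul]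

/-- flat partitions: all gaps at most 1 -/
def Flat (l : SeqPartition) : Prop := ∀ i, gap l i ≤ 1

noncomputable def flatten (l : SeqPartition) : SeqPartition :=
  ofGaps (fun i => gap l i % 2) (pbound l) (fun i hi => by show gap l i % 2 = 0; rw [gap_pbound l i hi])

noncomputable def quotP (l : SeqPartition) : SeqPartition :=
  ofGaps (fun i => gap l i / 2) (pbound l) (fun i hi => by show gap l i / 2 = 0; rw [gap_pbound l i hi])

noncomputable def recomb (r E : SeqPartition) : SeqPartition :=
  ofGaps (fun i => gap r i + 2 * gap E i) (max (pbound r) (pbound E))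
    (fun i hi => by
      show gap r i + 2 * gap E i = 0
      rw [gap_pbound r i (le_trans (le_max_left _ _) hi), gap_pbound E i (le_trans (le_max_right _ _) hi)])

theorem gap_flatten (l : SeqPartition) (i : ℕ) : gap (flatten l) i = gap l i % 2 :=
  gap_ofGaps _ _ _ i

theorem gap_quotP (l : SeqPartition) (i : ℕ) : gap (quotP l) i = gap l i / 2 :=
  gap_ofGaps _ _ _ i

theorem gap_recomb (r E : SeqPartition) (i : ℕ) :
    gap (recomb r E) i = gap r i + 2 * gap E i := gap_ofGaps _ _ _ i

theorem flat_flatten (l : SeqPartition) : Flat (flatten l) := by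
  intro i; rw [gap_flatten]; omega

theorem ofGaps_eq_self (l : SeqPartition) (g : ℕ → ℕ) (N : ℕ) (hg) (h : ∀ j, g j = gap l j) :
    ofGaps g N hg = l := by
  rw [ofGaps_ext g (gap l) N (pbound l) hg (gap_pbound l) h]
  exact ofGaps_gap l (pbound l) (pbound_spec l) (gap_pbound l)

theorem recomb_flatten_quotP (l : SeqPartition) : recomb (flatten l) (quotP l) = l := by
  apply ofGaps_eq_self
  intro j
  rw [gap_flatten, gap_quotP]
  omega

theorem flatten_recomb (r E : SeqPartition) (hr : Flat r) : flatten (recomb r E) = r := by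
  apply ofGaps_eq_self
  intro j
  rw [gap_recomb]
  have := hr j
  omega

theorem quotP_recomb (r E : SeqPartition) (hr : Flat r) : quotP (recomb r E) = E := by
  apply ofGaps_eq_self
  intro j
  rw [gap_recomb]
  have := hr j
  omega

theorem recomb_parts_bound (r E : SeqPartition) :
    ∀ i, max (pbound r) (pbound E) ≤ i → (recomb r E).parts i = 0 := by
  intro i hi
  exact ofGaps_parts_zero_of_le _ _ _ i hi

theorem flatten_parts_bound (l : SeqPartition) :
    ∀ i, pbound l ≤ i → (flatten l).parts i = 0 := by
  intro i hi; exact ofGaps_parts_zero_of_le _ _ _ i hi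

theorem quotP_parts_bound (l : SeqPartition) :
    ∀ i, pbound l ≤ i → (quotP l).parts i = 0 := by
  intro i hi; exact ofGaps_parts_zero_of_le _ _ _ i hi

theorem size_recomb (r E : SeqPartition) : (recomb r E).size = r.size + 2 * E.size := by
  set N := max (pbound r) (pbound E) with hN
  rw [size_gapsum (recomb r E) N (recomb_parts_bound r E),
    size_gapsum r N (fun i hi => pbound_spec r i (by omega)),
    size_gapsum E N (fun i hi => pbound_spec E i (by omega)), Finset.mul_sum,
    ← Finset.sum_add_distrib]
  apply Finset.sum_congr rfl
  intro j _
  rw [gap_recomb]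
  ring

theorem size_split (l : SeqPartition) : l.size = (flatten l).size + 2 * (quotP l).size := by
  conv_lhs => rw [← recomb_flatten_quotP l]
  rw [size_recomb]

/-- Parity comparison of partitions gives equal Dstat. -/
theorem Dstat_of_parity (l m : SeqPartition) (h : ∀ i, l.parts i % 2 = m.parts i % 2) :
    Dstat l = Dstat m := by
  set N := max (pbound l) (pbound m) with hN
  rw [Dstat_row l N (fun i hi => pbound_spec l i (by omega)),
    Dstat_row m N (fun i hi => pbound_spec m i (by omega))]
  apply Finset.sum_congr rfl
  intro i _
  congr 1
  have hodd : Odd (l.parts i) ↔ Odd (m.parts i) := by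
    rw [Nat.odd_iff, Nat.odd_iff, h i]
  simp only [hodd]

theorem parity_sum (s : Finset ℕ) (g g' : ℕ → ℕ) (h : ∀ j, g j % 2 = g' j % 2) :
    (∑ j ∈ s, g j) % 2 = (∑ j ∈ s, g' j) % 2 := by
  rw [Finset.sum_nat_mod, Finset.sum_congr rfl (fun j _ => h j), ← Finset.sum_nat_mod]

theorem Dstat_flatten (l : SeqPartition) : Dstat (flatten l) = Dstat l := by
  apply Dstat_of_parity
  intro i
  rw [show (flatten l).parts i = ∑ j ∈ Finset.Ico i (pbound l), gap l j % 2 from rfl,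
    parts_eq_sum_gap l (pbound l) (pbound_spec l) i]
  exact parity_sum _ _ _ (fun j => by omega)

theorem Dstat_recomb (r E : SeqPartition) : Dstat (recomb r E) = Dstat r := by
  apply Dstat_of_parity
  intro i
  set N := max (pbound r) (pbound E) with hN
  rw [show (recomb r E).parts i = ∑ j ∈ Finset.Ico i N, (gap r j + 2 * gap E j) from rfl,
    parts_eq_sum_gap r N (fun i hi => pbound_spec r i (by omega)) i]
  exact parity_sum _ _ _ (fun j => by omega)

theorem h20_eq_quotP (l : SeqPartition) : l.h20 = (quotP l).parts 0 := by
  rw [h20_eq_sum l (pbound l) (pbound_spec l),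
    show (quotP l).parts 0 = ∑ j ∈ Finset.Ico 0 (pbound l), gap l j / 2 from rfl,
    Finset.range_eq_Ico]

theorem parts_ge_gap (l : SeqPartition) (i : ℕ) : gap l i ≤ l.parts i := by
  have := parts_succ_add_gap l i
  omega

/-- the a2 bridge -/
theorem a2_eq_numParts_quotP_conj (l : SeqPartition) : l.a2 = numParts (quotP (conj l)) := by
  classical
  set E := quotP (conj l) with hE
  set m := E.numParts with hm
  have hchar : ∀ i, i < m ↔ E.parts i ≠ 0 := fun i => lt_numParts_iff E i
  set V : Set ℕ := {v : ℕ | ∃ i, l.parts i = v ∧ l.parts (i + 1) = v} with hV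
  have h0V : 0 ∈ V := by
    refine ⟨pbound l, pbound_spec l _ le_rfl, pbound_spec l _ (by omega)⟩
  have hgE : ∀ v, gap E v = gap (conj l) v / 2 := gap_quotP (conj l)
  have key1 : ∀ v, (v + 1 ∈ V) ↔ gap E v ≠ 0 := by
    intro v
    have hSfin : {r : ℕ | l.parts r = v + 1}.Finite := by
      apply Set.Finite.subset l.finite_support
      intro r hr
      simp only [Set.mem_setOf_eq, Function.mem_support] at *
      omega
    rw [hgE, gap_conj]
    constructor
    · rintro ⟨i, h1, h2⟩
      have h2card : 1 < {r : ℕ | l.parts r = v + 1}.ncard := by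
        rw [Set.one_lt_ncard_iff hSfin]
        exact ⟨i, i+1, h1, h2, by omega⟩
      omega
    · intro hc
      have h2card : 1 < {r : ℕ | l.parts r = v + 1}.ncard := by omega
      obtain ⟨a, b, ha, hb, hab⟩ := (Set.one_lt_ncard_iff hSfin).mp h2card
      simp only [Set.mem_setOf_eq] at ha hb
      rcases Nat.lt_or_ge a b with hlt | hge
      · have h1 := l.antitone (show a + 1 ≤ b by omega)
        have h2 := l.antitone (show a ≤ a + 1 by omega)
        exact ⟨a, ha, by omega⟩
      · have hlt : b < a := by omega
        have h1 := l.antitone (show b + 1 ≤ a by omega)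
        have h2 := l.antitone (show b ≤ b + 1 by omega)
        exact ⟨b, hb, by omega⟩
  have hEparts_ge : ∀ v, gap E v ≤ E.parts v := parts_ge_gap E
  show sSup V = m
  rcases Nat.eq_zero_or_pos m with hm0 | hmpos
  · have hallzero : ∀ v, gap E v = 0 := by
      intro v
      have : E.parts v = 0 := by
        have h1 := E.antitone (Nat.zero_le v)
        have h2 : ¬ (0 < m) := by omega
        rw [hchar 0] at h2
        omega
      have := hEparts_ge v
      omega
    have : V = {0} := by
      ext v
      rcases v with _ | w
      · simp [h0V]
      · simp only [Set.mem_singleton_iff]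
        constructor
        · intro hv
          have := (key1 w).mp hv
          rw [hallzero w] at this
          omega
        · omega
    rw [this, csSup_singleton, hm0]
  · obtain ⟨m', hm'⟩ : ∃ m', m = m' + 1 := ⟨m - 1, by omega⟩
    have hne : E.parts m' ≠ 0 := (hchar m').mp (by omega)
    have hz : E.parts (m' + 1) = 0 := by
      by_contra hc
      have hc' : E.parts (m' + 1) ≠ 0 := hc
      rw [← hchar (m' + 1)] at hc'
      omega
    have hgm' : gap E m' ≠ 0 := by
      have := parts_succ_add_gap E m'
      omega
    have hmem : m' + 1 ∈ V := (key1 m').mpr hgm'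
    have hub : ∀ v ∈ V, v ≤ m' + 1 := by
      intro v hv
      rcases v with _ | w
      · omega
      · have hg := (key1 w).mp hv
        have h1 : E.parts w ≠ 0 := by
          have := hEparts_ge w
          omega
        rw [← hchar w] at h1
        omega
    rw [hm']
    exact le_antisymm (csSup_le ⟨0, h0V⟩ hub) (le_csSup ⟨m'+1, hub⟩ hmem)

end Aux5
namespace Aux6
open SeqPartition Aux Aux2 Aux3 Aux4 Aux5

def Aset (n : ℕ) (δ : ℤ) (r : ℕ) : Set SeqPartition :=
  {μ | μ.size = n ∧ Dstat μ = δ ∧ μ.h20 = r}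

def Bset (n : ℕ) (δ : ℤ) (r : ℕ) : Set SeqPartition :=
  {μ | μ.size = n ∧ Dstat μ = δ ∧ μ.a2 = r}

def Xset (n : ℕ) (δ : ℤ) (r : ℕ) : Set (SeqPartition × SeqPartition) :=
  {p | Flat p.1 ∧ Dstat p.1 = δ ∧ p.1.size + 2 * p.2.size = n ∧ p.2.parts 0 = r}

def Yset (n : ℕ) (δ : ℤ) (r : ℕ) : Set (SeqPartition × SeqPartition) :=
  {p | Flat p.1 ∧ Dstat p.1 = δ ∧ p.1.size + 2 * p.2.size = n ∧ p.2.numParts = r}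

theorem A_to_X (n : ℕ) (δ : ℤ) (r : ℕ) :
    (fun l => (flatten l, quotP l)) '' Aset n δ r = Xset n δ r := by
  ext ⟨ρ, E⟩
  simp only [Set.mem_image, Aset, Xset, Set.mem_setOf_eq, Prod.mk.injEq]
  constructor
  · rintro ⟨l, ⟨hsz, hD, hh⟩, h1, h2⟩
    subst h1; subst h2
    refine ⟨flat_flatten l, by rw [Dstat_flatten l, hD], ?_, ?_⟩
    · rw [← size_split l, hsz]
    · rw [← h20_eq_quotP l, hh]
  · rintro ⟨hflat, hD, hsz, hr⟩
    refine ⟨recomb ρ E, ⟨?_, ?_, ?_⟩, ?_, ?_⟩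
    · rw [size_recomb, hsz]
    · rw [Dstat_recomb, hD]
    · rw [h20_eq_quotP, quotP_recomb ρ E hflat, hr]
    · rw [flatten_recomb ρ E hflat]
    · rw [quotP_recomb ρ E hflat]

theorem A_inj (n : ℕ) (δ : ℤ) (r : ℕ) :
    Set.InjOn (fun l => (flatten l, quotP l)) (Aset n δ r) := by
  intro a _ b _ hab
  simp only [Prod.mk.injEq] at hab
  rw [← recomb_flatten_quotP a, ← recomb_flatten_quotP b, hab.1, hab.2]

theorem B_to_Y (n : ℕ) (δ : ℤ) (r : ℕ) :
    (fun l => (flatten (conj l), quotP (conj l))) '' Bset n δ r = Yset n δ r := by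
  ext ⟨ρ, E⟩
  simp only [Set.mem_image, Bset, Yset, Set.mem_setOf_eq, Prod.mk.injEq]
  constructor
  · rintro ⟨l, ⟨hsz, hD, hh⟩, h1, h2⟩
    subst h1; subst h2
    refine ⟨flat_flatten _, by rw [Dstat_flatten, Dstat_conj, hD], ?_, ?_⟩
    · rw [← size_split (conj l), size_conj, hsz]
    · rw [← a2_eq_numParts_quotP_conj l, hh]
  · rintro ⟨hflat, hD, hsz, hr⟩
    refine ⟨conj (recomb ρ E), ⟨?_, ?_, ?_⟩, ?_, ?_⟩
    · rw [size_conj, size_recomb, hsz]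
    · rw [Dstat_conj, Dstat_recomb, hD]
    · rw [a2_eq_numParts_quotP_conj, conj_conj, quotP_recomb ρ E hflat, hr]
    · rw [conj_conj, flatten_recomb ρ E hflat]
    · rw [conj_conj, quotP_recomb ρ E hflat]

theorem B_inj (n : ℕ) (δ : ℤ) (r : ℕ) :
    Set.InjOn (fun l => (flatten (conj l), quotP (conj l))) (Bset n δ r) := by
  intro a _ b _ hab
  simp only [Prod.mk.injEq] at hab
  have : recomb (flatten (conj a)) (quotP (conj a))
      = recomb (flatten (conj b)) (quotP (conj b)) := by rw [hab.1, hab.2]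
  rw [recomb_flatten_quotP, recomb_flatten_quotP] at this
  rw [← conj_conj a, ← conj_conj b, this]

theorem X_to_Y (n : ℕ) (δ : ℤ) (r : ℕ) :
    (fun p : SeqPartition × SeqPartition => (p.1, conj p.2)) '' Xset n δ r = Yset n δ r := by
  ext ⟨ρ, E⟩
  simp only [Set.mem_image, Xset, Yset, Set.mem_setOf_eq, Prod.mk.injEq, Prod.exists]
  constructor
  · rintro ⟨a, b, ⟨hflat, hD, hsz, hr⟩, h1, h2⟩
    subst h1; subst h2
    refine ⟨hflat, hD, by rw [size_conj]; exact hsz, by rw [numParts_conj]; exact hr⟩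
  · rintro ⟨hflat, hD, hsz, hr⟩
    refine ⟨ρ, conj E, ⟨hflat, hD, by rw [size_conj]; exact hsz, ?_⟩, rfl, conj_conj E⟩
    rw [conj_parts_zero, hr]

theorem X_inj (n : ℕ) (δ : ℤ) (r : ℕ) :
    Set.InjOn (fun p : SeqPartition × SeqPartition => (p.1, conj p.2)) (Xset n δ r) := by
  rintro ⟨a1, a2⟩ _ ⟨b1, b2⟩ _ hab
  simp only [Prod.mk.injEq] at hab ⊢
  refine ⟨hab.1, ?_⟩
  rw [← conj_conj a2, ← conj_conj b2, hab.2]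

theorem main_count (n : ℕ) (δ : ℤ) (r : ℕ) :
    (Aset n δ r).ncard = (Bset n δ r).ncard := by
  have h1 : (Aset n δ r).ncard = (Xset n δ r).ncard := by
    rw [← A_to_X n δ r, Set.ncard_image_of_injOn (A_inj n δ r)]
  have h2 : (Bset n δ r).ncard = (Yset n δ r).ncard := by
    rw [← B_to_Y n δ r, Set.ncard_image_of_injOn (B_inj n δ r)]
  have h3 : (Xset n δ r).ncard = (Yset n δ r).ncard := by
    rw [← X_to_Y n δ r, Set.ncard_image_of_injOn (X_inj n δ r)]
  omega

end Aux6
theorem statement13 (n k r : ℕ) :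
    {μ : SeqPartition | μ.size = n ∧ TwoCoreOf μ (staircase k) ∧ μ.h20 = r}.ncard =
    {μ : SeqPartition | μ.size = n ∧ TwoCoreOf μ (staircase k) ∧ μ.a2 = r}.ncard := by
  have hA : {μ : SeqPartition | μ.size = n ∧ TwoCoreOf μ (staircase k) ∧ μ.h20 = r}
      = Aux6.Aset n (Aux4.delta k) r := by
    ext μ
    simp only [Set.mem_setOf_eq, Aux6.Aset, Aux4.twoCoreOf_iff]
  have hB : {μ : SeqPartition | μ.size = n ∧ TwoCoreOf μ (staircase k) ∧ μ.a2 = r}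
      = Aux6.Bset n (Aux4.delta k) r := by
    ext μ
    simp only [Set.mem_setOf_eq, Aux6.Bset, Aux4.twoCoreOf_iff]
  rw [hA, hB]
  exact Aux6.main_count n (Aux4.delta k) r
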